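/- For a fixed matrix X ∈ ℝ^{K×K}, vectors a ∈ ℝ^K, and c ≥ 0: max over δG with columns ‖δG_i‖₂ ≤ c of ‖X a + δG a‖₂ equals ‖X a‖₂ + c ‖a‖₁. -/

import Mathlib

open Finset

noncomputable def e2 {K : ℕ} (v : Fin K → ℝ) : ℝ :=
  Real.sqrt (∑ i, (v i) ^ 2)

noncomputable def l1 {K : ℕ} (v : Fin K → ℝ) : ℝ := ∑ i, |v i|

noncomputable def Emap (K : ℕ) : (Fin K → ℝ) ≃ₗ[ℝ] EuclideanSpace ℝ (Fin K) :=
  (WithLp.linearEquiv 2 ℝ (Fin K → ℝ)).symm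

lemma e2_eq_norm {K : ℕ} (v : Fin K → ℝ) : e2 v = ‖Emap K v‖ := by
  rw [EuclideanSpace.norm_eq]
  simp [e2, Emap, Real.norm_eq_abs, sq_abs, WithLp.linearEquiv]

lemma e2_nonneg {K : ℕ} (v : Fin K → ℝ) : 0 ≤ e2 v := Real.sqrt_nonneg _

lemma e2_smul {K : ℕ} (r : ℝ) (v : Fin K → ℝ) : e2 (r • v) = |r| * e2 v := by
  rw [e2_eq_norm, e2_eq_norm, map_smul, norm_smul, Real.norm_eq_abs]

lemma abs_sign_le (x : ℝ) : |Real.sign x| ≤ 1 := by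
  rcases lt_trichotomy x 0 with h|h|h
  · simp [Real.sign_of_neg h]
  · simp [h]
  · simp [Real.sign_of_pos h]

lemma sign_mul_self' (x : ℝ) : Real.sign x * x = |x| := by
  rcases lt_trichotomy x 0 with h|h|h
  · rw [Real.sign_of_neg h, abs_of_neg h]; ring
  · simp [h]
  · rw [Real.sign_of_pos h, abs_of_pos h]; ring

/-- Vector case of the robust/Lasso equivalence: the worst-case perturbed residual norm
equals the nominal norm plus `c` times the ℓ¹ norm of `a`. -/
theorem max_perturbed_eq (K : ℕ) (X : Matrix (Fin K) (Fin K) ℝ) (a : Fin K → ℝ)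
    (c : ℝ) (hc : 0 ≤ c) :
    sSup {s : ℝ | ∃ δG : Matrix (Fin K) (Fin K) ℝ,
        (∀ i : Fin K, e2 (fun j => δG j i) ≤ c) ∧
        s = e2 (X.mulVec a + δG.mulVec a)} =
    e2 (X.mulVec a) + c * l1 a := by
  have hl1 : 0 ≤ l1 a := Finset.sum_nonneg fun i _ => abs_nonneg _
  apply IsGreatest.csSup_eq
  constructor
  · -- membership
    rcases Nat.eq_zero_or_pos K with hK | hK
    · subst hK
      refine ⟨0, fun i => i.elim0, ?_⟩
      simp [l1, Matrix.zero_mulVec]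
    · set b := X.mulVec a with hb_def
      have key : ∃ u : Fin K → ℝ, e2 u = 1 ∧ b = e2 b • u := by
        by_cases hb : b = 0
        · refine ⟨Pi.single ⟨0, hK⟩ 1, ?_, by simp [hb, e2]⟩
          simp [e2, Pi.single_apply]
        · have hne : e2 b ≠ 0 := by
            intro h
            apply hb
            have := e2_eq_norm b
            rw [h] at this
            have : Emap K b = 0 := by
              have := (norm_eq_zero).mp this.symm
              exact this
            have := congrArg (Emap K).symm this
            simpa using this
          have hpos : 0 < e2 b := lt_of_le_of_ne (e2_nonneg b) (Ne.symm hne)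
          refine ⟨(e2 b)⁻¹ • b, ?_, ?_⟩
          · rw [e2_smul, abs_inv, abs_of_nonneg (e2_nonneg b), inv_mul_cancel₀ hne]
          · rw [smul_smul, mul_inv_cancel₀ hne, one_smul]
      obtain ⟨u, hu1, hbu⟩ := key
      refine ⟨fun j i => (Real.sign (a i) * c) * u j, ?_, ?_⟩
      · intro i
        have hcol : (fun j => Real.sign (a i) * c * u j) = (Real.sign (a i) * c) • u := rfl
        rw [hcol, e2_smul, hu1, mul_one, abs_mul, abs_of_nonneg hc]
        calc |Real.sign (a i)| * c ≤ 1 * c :=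
              mul_le_mul_of_nonneg_right (abs_sign_le _) hc
          _ = c := one_mul c
      · have hsum : ∑ i, Real.sign (a i) * a i = l1 a :=
          Finset.sum_congr rfl fun i _ => sign_mul_self' _
        have hmv : Matrix.mulVec (fun j i => Real.sign (a i) * c * u j) a
            = (c * l1 a) • u := by
          funext j
          simp only [Matrix.mulVec, dotProduct, Pi.smul_apply, smul_eq_mul]
          have h1 : ∑ i, Real.sign (a i) * c * u j * a i
              = (c * u j) * ∑ i, Real.sign (a i) * a i := by
            rw [Finset.mul_sum]
            exact Finset.sum_congr rfl fun i _ => by ring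
          rw [h1, hsum]; ring
        have hcomb : b + (c * l1 a) • u = (e2 b + c * l1 a) • u := by
          rw [add_smul, ← hbu]
        rw [hmv, hcomb, e2_smul, hu1, mul_one,
          abs_of_nonneg (add_nonneg (e2_nonneg b) (mul_nonneg hc hl1))]
  · -- upper bound
    rintro s ⟨δG, hδ, rfl⟩
    have hcol : δG.mulVec a = ∑ i, a i • (fun j => δG j i) := by
      funext j
      simp [Matrix.mulVec, dotProduct, Finset.sum_apply, mul_comm]
    have h2 : ‖Emap K (δG.mulVec a)‖ ≤ c * l1 a := by
      rw [hcol, map_sum]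
      refine (norm_sum_le _ _).trans ?_
      have hb : ∀ i ∈ Finset.univ, ‖Emap K (a i • fun j => δG j i)‖ ≤ |a i| * c := by
        intro i _
        rw [map_smul, norm_smul, Real.norm_eq_abs, ← e2_eq_norm]
        exact mul_le_mul_of_nonneg_left (hδ i) (abs_nonneg _)
      refine (Finset.sum_le_sum hb).trans ?_
      rw [l1, Finset.mul_sum]
      exact le_of_eq (Finset.sum_congr rfl fun i _ => by ring)
    calc e2 (X.mulVec a + δG.mulVec a)
        = ‖Emap K (X.mulVec a) + Emap K (δG.mulVec a)‖ := by
          rw [e2_eq_norm, map_add]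
      _ ≤ ‖Emap K (X.mulVec a)‖ + ‖Emap K (δG.mulVec a)‖ := norm_add_le _ _
      _ ≤ e2 (X.mulVec a) + c * l1 a := by
          rw [← e2_eq_norm]
          exact add_le_add le_rfl h2
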